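/- The population Hajek contrast recovers the average RMST difference: E[1{Z=1} δ* Y / G(Y)] / E[1{Z=1} δ* / G(Y)] − E[1{Z=0} δ* Y / G(Y)] / E[1{Z=0} δ* / G(Y)] = Δ(t*); moreover the denominators satisfy E[1{Z=1} δ*/G(Y)] = π and E[1{Z=0} δ*/G(Y)] = 1 − π. -/

import Mathlib

open MeasureTheory ProbabilityTheory

/-- Key IPCW lemma: integrating out an independent censoring variable. -/
lemma aux_ipcw {Ω : Type*} [mΩ : MeasurableSpace Ω] (P : Measure Ω) [IsProbabilityMeasure P]
    (C : Ω → ℝ) (W : Ω → ℝ × ℝ × ℝ) (hC : Measurable C) (hW : Measurable W)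
    (hind : IndepFun W C P)
    (hatom : ∀ c : ℝ, P {ω | C ω = c} = 0)
    (G : ℝ → ℝ) (hG : ∀ y, G y = (P {ω | y < C ω}).toReal)
    (y : ℝ × ℝ × ℝ → ℝ) (hy : Measurable y)
    (ε : ℝ) (hε : 0 < ε) (hGε : ∀ w, ε ≤ G (y w))
    (f : ℝ × ℝ × ℝ → ℝ) (hf : Measurable f) (M : ℝ) (hfb : ∀ w, |f w| ≤ M) :
    ∫ ω, (if y (W ω) ≤ C ω then (1:ℝ) else 0) * f (W ω) / G (y (W ω)) ∂P
      = ∫ ω, f (W ω) ∂P := by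
  have hGanti : Antitone G := by
    intro a b hab
    rw [hG, hG]
    exact ENNReal.toReal_mono (measure_ne_top P _)
      (measure_mono (fun ω h => lt_of_le_of_lt hab h))
  have hGmeas : Measurable G := hGanti.measurable
  set g : (ℝ × ℝ × ℝ) × ℝ → ℝ :=
    fun p => (if y p.1 ≤ p.2 then (1:ℝ) else 0) * f p.1 / G (y p.1) with hg_def
  have gmeas : Measurable g := by
    apply Measurable.div
    · exact (Measurable.ite (measurableSet_le (hy.comp measurable_fst) measurable_snd)
        measurable_const measurable_const).mul (hf.comp measurable_fst)
    · exact hGmeas.comp (hy.comp measurable_fst)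
  haveI : IsProbabilityMeasure (P.map W) := Measure.isProbabilityMeasure_map hW.aemeasurable
  haveI : IsProbabilityMeasure (P.map C) := Measure.isProbabilityMeasure_map hC.aemeasurable
  have hprod : P.map (fun ω => (W ω, C ω)) = (P.map W).prod (P.map C) :=
    (indepFun_iff_map_prod_eq_prod_map_map hW.aemeasurable hC.aemeasurable).mp hind
  have hM : 0 ≤ M := le_trans (abs_nonneg _) (hfb 0)
  have hIntg : Integrable g ((P.map W).prod (P.map C)) := by
    refine Integrable.mono' (integrable_const (M / ε)) gmeas.aestronglyMeasurable
      (Filter.Eventually.of_forall fun p => ?_)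
    have hg0 : 0 < G (y p.1) := lt_of_lt_of_le hε (hGε _)
    rw [Real.norm_eq_abs, hg_def]
    simp only
    rw [abs_div, abs_mul]
    have h1 : |if y p.1 ≤ p.2 then (1:ℝ) else 0| ≤ 1 := by split <;> simp
    have hnum : |if y p.1 ≤ p.2 then (1:ℝ) else 0| * |f p.1| ≤ M := by
      calc |if y p.1 ≤ p.2 then (1:ℝ) else 0| * |f p.1| ≤ 1 * M :=
            mul_le_mul h1 (hfb _) (abs_nonneg _) zero_le_one
        _ = M := one_mul M
    have hden : ε ≤ |G (y p.1)| := by rw [abs_of_pos hg0]; exact hGε _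
    exact div_le_div₀ hM hnum hε hden
  have key : ∫ ω, g (W ω, C ω) ∂P = ∫ w, f w ∂(P.map W) := by
    have h1 : ∫ ω, g (W ω, C ω) ∂P = ∫ p, g p ∂(P.map (fun ω => (W ω, C ω))) :=
      (integral_map (hW.prodMk hC).aemeasurable gmeas.aestronglyMeasurable).symm
    rw [h1, hprod, integral_prod _ hIntg]
    refine integral_congr_ae (Filter.Eventually.of_forall fun w => ?_)
    have hg0 : 0 < G (y w) := lt_of_lt_of_le hε (hGε _)
    have hrw : ∀ c : ℝ, g (w, c) = (f w / G (y w)) * (if y w ≤ c then (1:ℝ) else 0) := by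
      intro c; rw [hg_def]; simp only; ring
    simp_rw [hrw]
    rw [integral_const_mul]
    have hset : MeasurableSet {c : ℝ | y w ≤ c} := measurableSet_le measurable_const measurable_id
    have hind2 : (fun c => if y w ≤ c then (1:ℝ) else 0)
        = Set.indicator {c : ℝ | y w ≤ c} (fun _ => (1:ℝ)) := by
      funext c; simp [Set.indicator_apply, Set.mem_setOf_eq]
    rw [hind2, integral_indicator_const (1:ℝ) hset, smul_eq_mul, mul_one]
    have hmapset : (P.map C) {c | y w ≤ c} = P {ω | y w ≤ C ω} := by
      rw [Measure.map_apply hC hset]; rfl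
    have hle : P {ω | y w ≤ C ω} = P {ω | y w < C ω} := by
      have hsplit : {ω | y w ≤ C ω} = {ω | y w < C ω} ∪ {ω | C ω = y w} := by
        ext ω
        simp only [Set.mem_setOf_eq, Set.mem_union, le_iff_lt_or_eq]
        exact ⟨fun h => h.imp id Eq.symm, fun h => h.imp id Eq.symm⟩
      rw [hsplit]
      refine le_antisymm ?_ (measure_mono Set.subset_union_left)
      calc P ({ω | y w < C ω} ∪ {ω | C ω = y w})
          ≤ P {ω | y w < C ω} + P {ω | C ω = y w} := measure_union_le _ _
        _ = P {ω | y w < C ω} := by rw [hatom]; simp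
    rw [measureReal_def, hmapset, hle, ← hG]
    exact div_mul_cancel₀ (f w) hg0.ne'
  calc ∫ ω, (if y (W ω) ≤ C ω then (1:ℝ) else 0) * f (W ω) / G (y (W ω)) ∂P
      = ∫ ω, g (W ω, C ω) ∂P := rfl
    _ = ∫ w, f w ∂(P.map W) := key
    _ = ∫ ω, f (W ω) ∂P := integral_map hW.aemeasurable hf.aestronglyMeasurable

theorem hajek_contrast_recovers_rmst_difference
    {Ω : Type*} [mΩ : MeasurableSpace Ω] (P : Measure Ω) [IsProbabilityMeasure P]
    (T1 T0 C Z : Ω → ℝ)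
    (hT1 : Measurable T1) (hT0 : Measurable T0) (hC : Measurable C) (hZ : Measurable Z)
    (hT1nonneg : ∀ ω, 0 ≤ T1 ω) (hT0nonneg : ∀ ω, 0 ≤ T0 ω)
    (hZ01 : ∀ ω, Z ω = 0 ∨ Z ω = 1)
    (π : ℝ) (hπ : (P {ω | Z ω = 1}).toReal = π) (hπ0 : 0 < π) (hπ1 : π < 1)
    (tstar : ℝ) (htstar : 0 < tstar)
    (hZind : IndepFun Z (fun ω => (T1 ω, T0 ω)) P)
    (hCind : IndepFun C (fun ω => (Z ω, T1 ω, T0 ω)) P)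
    (hatom : ∀ c : ℝ, P {ω | C ω = c} = 0)
    (G : ℝ → ℝ) (hG : ∀ y, G y = (P {ω | y < C ω}).toReal) (hGt : 0 < G tstar)
    (T Y δs : Ω → ℝ)
    (hT : ∀ ω, T ω = Z ω * T1 ω + (1 - Z ω) * T0 ω)
    (hY : ∀ ω, Y ω = min (T ω) tstar)
    (hδs : ∀ ω, δs ω = if Y ω ≤ C ω then 1 else 0) :
    ((∫ ω, (if Z ω = 1 then (1 : ℝ) else 0) * δs ω * Y ω / G (Y ω) ∂P)
        / (∫ ω, (if Z ω = 1 then (1 : ℝ) else 0) * δs ω / G (Y ω) ∂P)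
      - (∫ ω, (if Z ω = 0 then (1 : ℝ) else 0) * δs ω * Y ω / G (Y ω) ∂P)
        / (∫ ω, (if Z ω = 0 then (1 : ℝ) else 0) * δs ω / G (Y ω) ∂P)
      = (∫ ω, min (T1 ω) tstar ∂P) - ∫ ω, min (T0 ω) tstar ∂P) ∧
    (∫ ω, (if Z ω = 1 then (1 : ℝ) else 0) * δs ω / G (Y ω) ∂P = π) ∧
    (∫ ω, (if Z ω = 0 then (1 : ℝ) else 0) * δs ω / G (Y ω) ∂P = 1 - π) := by
  classical
  have hW : Measurable (fun ω => (Z ω, T1 ω, T0 ω)) := hZ.prodMk (hT1.prodMk hT0)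
  have hind : IndepFun (fun ω => (Z ω, T1 ω, T0 ω)) C P := hCind.symm
  set y : ℝ × ℝ × ℝ → ℝ :=
    fun w => min (max (w.1 * w.2.1 + (1 - w.1) * w.2.2) 0) tstar with hy_def
  have hy : Measurable y := by
    apply Measurable.min _ measurable_const
    apply Measurable.max _ measurable_const
    exact (measurable_fst.mul (measurable_fst.comp measurable_snd)).add
      ((measurable_const.sub measurable_fst).mul (measurable_snd.comp measurable_snd))
  have hTnn : ∀ ω, 0 ≤ T ω := by
    intro ω; rw [hT]
    rcases hZ01 ω with h | h
    · simpa [h] using hT0nonneg ω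
    · simpa [h] using hT1nonneg ω
  have hyW : ∀ ω, Y ω = y (Z ω, T1 ω, T0 ω) := by
    intro ω
    rw [hY ω, hy_def]
    simp only
    rw [← hT ω, max_eq_left (hTnn ω)]
  have hy_nonneg : ∀ w, 0 ≤ y w := fun w => le_min (le_max_right _ _) htstar.le
  have hy_le : ∀ w, y w ≤ tstar := fun w => min_le_right _ _
  have hGanti : Antitone G := by
    intro a b hab
    rw [hG, hG]
    exact ENNReal.toReal_mono (measure_ne_top P _)
      (measure_mono (fun ω h => lt_of_le_of_lt hab h))
  have hGε : ∀ w, G tstar ≤ G (y w) := fun w => hGanti (hy_le w)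
  -- the set {Z = 1}
  have hZ1set : MeasurableSet {ω | Z ω = 1} := hZ (measurableSet_singleton 1)
  have hZ0set : MeasurableSet {ω | Z ω = 0} := hZ (measurableSet_singleton 0)
  have hπ' : (P {ω | Z ω = 0}).toReal = 1 - π := by
    have hcomp : {ω | Z ω = 0} = {ω | Z ω = 1}ᶜ := by
      ext ω; rcases hZ01 ω with h | h <;> simp [h]
    rw [hcomp, measure_compl hZ1set (measure_ne_top _ _), measure_univ,
      ENNReal.toReal_sub_of_le prob_le_one ENNReal.one_ne_top, ENNReal.toReal_one, hπ]
  -- base IPCW identity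
  have base : ∀ (f : ℝ × ℝ × ℝ → ℝ), Measurable f → ∀ M : ℝ, (∀ w, |f w| ≤ M) →
      ∫ ω, (if y (Z ω, T1 ω, T0 ω) ≤ C ω then (1:ℝ) else 0)
          * f (Z ω, T1 ω, T0 ω) / G (y (Z ω, T1 ω, T0 ω)) ∂P
        = ∫ ω, f (Z ω, T1 ω, T0 ω) ∂P := by
    intro f hf M hfb
    exact aux_ipcw P C (fun ω => (Z ω, T1 ω, T0 ω)) hC hW hind hatom G hG y hy
      (G tstar) hGt hGε f hf M hfb
  -- measurability of indicator functions on the first coordinate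
  have hmeas_ind : ∀ z : ℝ, Measurable (fun w : ℝ × ℝ × ℝ => if w.1 = z then (1:ℝ) else 0) := by
    intro z
    exact Measurable.ite (measurable_fst (measurableSet_singleton z))
      measurable_const measurable_const
  -- denominators
  have den : ∀ z : ℝ,
      ∫ ω, (if Z ω = z then (1:ℝ) else 0) * δs ω / G (Y ω) ∂P
        = (P {ω | Z ω = z}).toReal := by
    intro z
    have h1 : ∀ ω, (if Z ω = z then (1:ℝ) else 0) * δs ω / G (Y ω)
        = (if y (Z ω, T1 ω, T0 ω) ≤ C ω then (1:ℝ) else 0)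
            * (fun w : ℝ × ℝ × ℝ => if w.1 = z then (1:ℝ) else 0) (Z ω, T1 ω, T0 ω)
            / G (y (Z ω, T1 ω, T0 ω)) := by
      intro ω
      rw [hδs ω, hyW ω]
      simp only
      ring
    rw [integral_congr_ae (Filter.Eventually.of_forall h1),
      base _ (hmeas_ind z) 1 (by intro w; split <;> simp)]
    have h2 : ∀ ω, (fun w : ℝ × ℝ × ℝ => if w.1 = z then (1:ℝ) else 0) (Z ω, T1 ω, T0 ω)
        = Set.indicator {ω | Z ω = z} (fun _ => (1:ℝ)) ω := by
      intro ω; simp [Set.indicator_apply, Set.mem_setOf_eq]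
    rw [integral_congr_ae (Filter.Eventually.of_forall h2),
      integral_indicator_const (1:ℝ) (show MeasurableSet {ω | Z ω = z} from hZ (measurableSet_singleton z)), smul_eq_mul, mul_one, measureReal_def]
  -- numerators
  have num : ∀ (z : ℝ) (Tz : Ω → ℝ), Measurable Tz → (∀ ω, 0 ≤ Tz ω) →
      (∀ ω, Z ω = z → T ω = Tz ω) →
      (∀ ω, Z ω ≠ z) ∨ True →  -- dummy to keep shape simple; unused
      ∫ ω, (if Z ω = z then (1:ℝ) else 0) * δs ω * Y ω / G (Y ω) ∂P
        = ∫ ω, (if Z ω = z then (1:ℝ) else 0) * min (Tz ω) tstar ∂P := by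
    intro z Tz hTz hTznn hTeq _
    have h1 : ∀ ω, (if Z ω = z then (1:ℝ) else 0) * δs ω * Y ω / G (Y ω)
        = (if y (Z ω, T1 ω, T0 ω) ≤ C ω then (1:ℝ) else 0)
            * (fun w : ℝ × ℝ × ℝ => (if w.1 = z then (1:ℝ) else 0) * y w) (Z ω, T1 ω, T0 ω)
            / G (y (Z ω, T1 ω, T0 ω)) := by
      intro ω
      rw [hδs ω, hyW ω]
      simp only
      ring
    have hfmeas : Measurable (fun w : ℝ × ℝ × ℝ => (if w.1 = z then (1:ℝ) else 0) * y w) :=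
      (hmeas_ind z).mul hy
    have hfb : ∀ w : ℝ × ℝ × ℝ, |(if w.1 = z then (1:ℝ) else 0) * y w| ≤ tstar := by
      intro w
      rw [abs_mul]
      calc |if w.1 = z then (1:ℝ) else 0| * |y w| ≤ 1 * tstar := by
            apply mul_le_mul _ _ (abs_nonneg _) zero_le_one
            · split <;> simp
            · rw [abs_of_nonneg (hy_nonneg w)]; exact hy_le w
        _ = tstar := one_mul tstar
    rw [integral_congr_ae (Filter.Eventually.of_forall h1), base _ hfmeas tstar hfb]
    refine integral_congr_ae (Filter.Eventually.of_forall fun ω => ?_)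
    simp only
    by_cases h : Z ω = z
    · have hYω : y (Z ω, T1 ω, T0 ω) = min (Tz ω) tstar := by
        rw [← hyW ω, hY ω, hTeq ω h]
      rw [hYω]
    · simp [h]
  -- expectation under independence
  have indep_split : ∀ (z : ℝ) (Tz : Ω → ℝ),
      IndepFun (fun ω => if Z ω = z then (1:ℝ) else 0) (fun ω => min (Tz ω) tstar) P →
      Measurable Tz →
      ∫ ω, (if Z ω = z then (1:ℝ) else 0) * min (Tz ω) tstar ∂P
        = (P {ω | Z ω = z}).toReal * ∫ ω, min (Tz ω) tstar ∂P := by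
    intro z Tz hi hTz
    have hXm : AEStronglyMeasurable (fun ω => if Z ω = z then (1:ℝ) else 0) P := by
      exact (Measurable.ite (hZ (measurableSet_singleton z))
        measurable_const measurable_const).aestronglyMeasurable
    have hVm : AEStronglyMeasurable (fun ω => min (Tz ω) tstar) P :=
      (hTz.min measurable_const).aestronglyMeasurable
    have := hi.integral_mul_eq_mul_integral hXm hVm
    rw [show (fun ω => if Z ω = z then (1:ℝ) else 0) * (fun ω => min (Tz ω) tstar)
        = fun ω => (if Z ω = z then (1:ℝ) else 0) * min (Tz ω) tstar from rfl] at this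
    rw [this]
    congr 1
    have h2 : ∀ ω, (if Z ω = z then (1:ℝ) else 0)
        = Set.indicator {ω | Z ω = z} (fun _ => (1:ℝ)) ω := by
      intro ω; simp [Set.indicator_apply, Set.mem_setOf_eq]
    rw [integral_congr_ae (Filter.Eventually.of_forall h2),
      integral_indicator_const (1:ℝ) (show MeasurableSet {ω | Z ω = z} from hZ (measurableSet_singleton z)), smul_eq_mul, mul_one, measureReal_def]
  -- independence facts
  have hi1 : IndepFun (fun ω => if Z ω = 1 then (1:ℝ) else 0) (fun ω => min (T1 ω) tstar) P := by
    have := hZind.comp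
      (show Measurable (fun t : ℝ => if t = 1 then (1:ℝ) else 0) from
        Measurable.ite (measurableSet_singleton 1) measurable_const measurable_const)
      (show Measurable (fun p : ℝ × ℝ => min p.1 tstar) from
        measurable_fst.min measurable_const)
    exact this
  have hi0 : IndepFun (fun ω => if Z ω = 0 then (1:ℝ) else 0) (fun ω => min (T0 ω) tstar) P := by
    have := hZind.comp
      (show Measurable (fun t : ℝ => if t = 0 then (1:ℝ) else 0) from
        Measurable.ite (measurableSet_singleton 0) measurable_const measurable_const)
      (show Measurable (fun p : ℝ × ℝ => min p.2 tstar) from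
        measurable_snd.min measurable_const)
    exact this
  have hT1eq : ∀ ω, Z ω = 1 → T ω = T1 ω := by
    intro ω h; rw [hT ω, h]; ring
  have hT0eq : ∀ ω, Z ω = 0 → T ω = T0 ω := by
    intro ω h; rw [hT ω, h]; ring
  have num1 : ∫ ω, (if Z ω = 1 then (1:ℝ) else 0) * δs ω * Y ω / G (Y ω) ∂P
      = π * ∫ ω, min (T1 ω) tstar ∂P := by
    rw [num 1 T1 hT1 hT1nonneg hT1eq (Or.inr trivial), indep_split 1 T1 hi1 hT1, hπ]
  have num0 : ∫ ω, (if Z ω = 0 then (1:ℝ) else 0) * δs ω * Y ω / G (Y ω) ∂P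
      = (1 - π) * ∫ ω, min (T0 ω) tstar ∂P := by
    rw [num 0 T0 hT0 hT0nonneg hT0eq (Or.inr trivial), indep_split 0 T0 hi0 hT0, hπ']
  have den1 : ∫ ω, (if Z ω = 1 then (1:ℝ) else 0) * δs ω / G (Y ω) ∂P = π := by
    rw [den 1, hπ]
  have den0 : ∫ ω, (if Z ω = 0 then (1:ℝ) else 0) * δs ω / G (Y ω) ∂P = 1 - π := by
    rw [den 0, hπ']
  refine ⟨?_, den1, den0⟩
  rw [num1, num0, den1, den0, mul_div_cancel_left₀ _ hπ0.ne',
    mul_div_cancel_left₀ _ (by linarith : (1:ℝ) - π ≠ 0)]
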